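/- Let U ⊆ ℂ be open and connected, let g : U → ℂ be holomorphic, nonconstant and nowhere zero, and let a₁, a₂, a₃ ∈ ℂ be such that on U the identity (3/2)·(g'/g)² − g''/g − (1/(1 + |g|²))·(g'/g)² = ( a₁·(g + conj(g)) − i·a₂·(g − conj(g)) + a₃·(|g|² − 1) )/(1 + |g|²) holds. Then, setting A := a₁ − i·a₂ and B := a₁ + i·a₂, the following hold on U: (3/2)·(g')²/g − g'' − B − a₃·g = 0, g''/g − (1/2)·(g'/g)² + A·g − a₃ = 0, and consequently (g')² = g·(−A·g² + 2·a₃·g + B). -/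

import Mathlib

open Complex

lemma deriv_eq_zero_of_conj_diff {f : ℂ → ℂ} {z : ℂ}
    (hf : DifferentiableAt ℂ f z)
    (hc : DifferentiableAt ℂ (fun w => (starRingEnd ℂ) (f w)) z) :
    deriv f z = 0 := by
  have h1 : HasFDerivAt f (ContinuousLinearMap.smulRight (1 : ℂ →L[ℂ] ℂ) (deriv f z)) z :=
    hf.hasDerivAt.hasFDerivAt
  have h2 : HasFDerivAt (fun w => (starRingEnd ℂ) (f w))
      (ContinuousLinearMap.smulRight (1 : ℂ →L[ℂ] ℂ)
        (deriv (fun w => (starRingEnd ℂ) (f w)) z)) z :=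
    hc.hasDerivAt.hasFDerivAt
  have h3 : HasFDerivAt (fun w => (starRingEnd ℂ) (f w))
      ((Complex.conjCLE : ℂ →L[ℝ] ℂ).comp
        ((ContinuousLinearMap.smulRight (1 : ℂ →L[ℂ] ℂ) (deriv f z)).restrictScalars ℝ)) z :=
    (Complex.conjCLE : ℂ →L[ℝ] ℂ).hasFDerivAt.comp z (h1.restrictScalars ℝ)
  have h4 := (h2.restrictScalars ℝ).unique h3
  have e1 := congrArg (fun (L : ℂ →L[ℝ] ℂ) => L 1) h4
  have eI := congrArg (fun (L : ℂ →L[ℝ] ℂ) => L Complex.I) h4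
  simp [Complex.conjCLE_apply, map_mul] at e1 eI
  rw [e1] at eI
  have h5 : (starRingEnd ℂ) (deriv f z) = 0 := by
    have := eI
    simp [Complex.ext_iff] at this ⊢
    constructor <;> linarith [this.1, this.2]
  simpa using congrArg (starRingEnd ℂ) h5

lemma key_alg (w c d1 d2 a₁ a₂ a₃ : ℂ) (hw : w ≠ 0) (ht : 1 + w*c ≠ 0)
    (h : 3/2*(d1/w)^2 - d2/w - (1/(1+w*c))*(d1/w)^2
      = (a₁*(w+c) - Complex.I*a₂*(w-c) + a₃*(w*c-1))/(1+w*c)) :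
    d2/w - (1/2)*(d1/w)^2 + (a₁ - Complex.I*a₂)*w - a₃
      = c * (3/2*d1^2/w - d2 - (a₁+Complex.I*a₂) - a₃*w) := by
  field_simp at h
  have h3 : w^3*(1+w*c) * ((3*d1^2-2*w*d2)*(1+w*c) - 2*d1^2)
      = w^3*(1+w*c) * (2*w^2*(a₁*(w+c) - Complex.I*a₂*(w-c) + a₃*(w*c-1))) := by
    linear_combination (w^3*(1+w*c)) * h
  have h4 := mul_left_cancel₀ (mul_ne_zero (pow_ne_zero 3 hw) ht) h3
  field_simp
  linear_combination (-1) * h4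

theorem linear_shiffman_function_gives_ode_for_gauss_map
    (U : Set ℂ) (hU : IsOpen U) (hconn : IsConnected U)
    (g : ℂ → ℂ) (hg : DifferentiableOn ℂ g U) (hg0 : ∀ z ∈ U, g z ≠ 0)
    (hnc : ¬ ∃ c : ℂ, Set.EqOn g (fun _ => c) U)
    (a₁ a₂ a₃ : ℂ)
    (hW : ∀ z ∈ U,
      (3 / 2) * (deriv g z / g z) ^ 2 - deriv (deriv g) z / g z
          - (1 / ((1 + ‖g z‖ ^ 2 : ℝ) : ℂ)) * (deriv g z / g z) ^ 2
        = (a₁ * (g z + (starRingEnd ℂ) (g z))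
            - Complex.I * a₂ * (g z - (starRingEnd ℂ) (g z))
            + a₃ * ((‖g z‖ ^ 2 - 1 : ℝ) : ℂ))
          / ((1 + ‖g z‖ ^ 2 : ℝ) : ℂ)) :
    ∀ z ∈ U,
      (3 / 2) * (deriv g z) ^ 2 / g z - deriv (deriv g) z
          - (a₁ + Complex.I * a₂) - a₃ * g z = 0 ∧
      deriv (deriv g) z / g z - (1 / 2) * (deriv g z / g z) ^ 2
          + (a₁ - Complex.I * a₂) * g z - a₃ = 0 ∧
      (deriv g z) ^ 2
        = g z * (-(a₁ - Complex.I * a₂) * (g z) ^ 2 + 2 * a₃ * g z + (a₁ + Complex.I * a₂)) := by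
  set Gf : ℂ → ℂ := fun z => (3 / 2) * (deriv g z) ^ 2 / g z - deriv (deriv g) z
      - (a₁ + Complex.I * a₂) - a₃ * g z with hGf
  set F : ℂ → ℂ := fun z => deriv (deriv g) z / g z - (1 / 2) * (deriv g z / g z) ^ 2
      + (a₁ - Complex.I * a₂) * g z - a₃ with hF
  have hga : AnalyticOnNhd ℂ g U := hg.analyticOnNhd hU
  have hg1 : AnalyticOnNhd ℂ (deriv g) U := hga.deriv
  have hg2 : AnalyticOnNhd ℂ (deriv (deriv g)) U := hg1.deriv
  -- key pointwise identity
  have hkey : ∀ z ∈ U, F z = (starRingEnd ℂ) (g z) * Gf z := by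
    intro z hz
    have hw : g z ≠ 0 := hg0 z hz
    have hc1 : ((‖g z‖ ^ 2 : ℝ) : ℂ) = g z * (starRingEnd ℂ) (g z) := by
      rw [Complex.sq_norm]; exact_mod_cast (Complex.mul_conj (g z)).symm
    have ht : (1 : ℂ) + g z * (starRingEnd ℂ) (g z) ≠ 0 := by
      rw [← hc1]
      have : ((1 + ‖g z‖ ^ 2 : ℝ) : ℂ) ≠ 0 :=
        Complex.ofReal_ne_zero.mpr (by positivity)
      simpa using this
    have h := hW z hz
    rw [show ((1 + ‖g z‖ ^ 2 : ℝ) : ℂ) = 1 + g z * (starRingEnd ℂ) (g z) by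
        push_cast [hc1]; ring,
      show ((‖g z‖ ^ 2 - 1 : ℝ) : ℂ) = g z * (starRingEnd ℂ) (g z) - 1 by
        push_cast [hc1]; ring] at h
    exact key_alg (g z) ((starRingEnd ℂ) (g z)) (deriv g z) (deriv (deriv g) z) a₁ a₂ a₃
      hw ht (by linear_combination h)
  -- differentiability of Gf and F on U
  have hGfd : DifferentiableOn ℂ Gf U := by
    apply DifferentiableOn.sub
    apply DifferentiableOn.sub
    apply DifferentiableOn.sub
    · exact (((hg1.differentiableOn.pow 2).const_mul _).div hg hg0)
    · exact hg2.differentiableOn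
    · exact differentiableOn_const _
    · exact (differentiableOn_const _).mul hg
  have hFd : DifferentiableOn ℂ F U := by
    apply DifferentiableOn.sub
    apply DifferentiableOn.add
    apply DifferentiableOn.sub
    · exact hg2.differentiableOn.div hg hg0
    · exact ((hg1.differentiableOn.div hg hg0).pow 2).const_mul _
    · exact (differentiableOn_const _).mul hg
    · exact differentiableOn_const _
  -- Gf vanishes identically on U
  have hGf0 : ∀ z ∈ U, Gf z = 0 := by
    by_contra hcon
    push_neg at hcon
    obtain ⟨z₀, hz₀U, hz₀⟩ := hcon
    set S : Set ℂ := U ∩ Gf ⁻¹' {0}ᶜ with hS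
    have hSopen : IsOpen S :=
      hGfd.continuousOn.isOpen_inter_preimage hU isOpen_compl_singleton
    have hz₀S : z₀ ∈ S := ⟨hz₀U, hz₀⟩
    have hSsub : S ⊆ U := Set.inter_subset_left
    -- conj ∘ g is holomorphic on S
    have hconjd : DifferentiableOn ℂ (fun w => (starRingEnd ℂ) (g w)) S := by
      have : DifferentiableOn ℂ (fun w => F w / Gf w) S :=
        (hFd.mono hSsub).div (hGfd.mono hSsub) (fun z hz => hz.2)
      apply this.congr
      intro z hz
      rw [hkey z (hSsub hz), mul_div_assoc, div_self hz.2, mul_one]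
    -- hence deriv g = 0 on S
    have hd0 : ∀ z ∈ S, deriv g z = 0 := by
      intro z hz
      exact deriv_eq_zero_of_conj_diff
        (hg.differentiableAt (hU.mem_nhds (hSsub hz)))
        (hconjd.differentiableAt (hSopen.mem_nhds hz))
    -- identity theorem: deriv g = 0 on U
    have hderiv0 : Set.EqOn (deriv g) (fun _ => (0 : ℂ)) U := by
      apply hg1.eqOn_of_preconnected_of_eventuallyEq analyticOnNhd_const
        hconn.isPreconnected hz₀U
      filter_upwards [hSopen.mem_nhds hz₀S] using hd0
    -- g constant near z₀, hence on U
    obtain ⟨r, hr, hball⟩ := Metric.isOpen_iff.mp hU z₀ hz₀U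
    have hconst : Set.EqOn g (fun _ => g z₀) (Metric.ball z₀ r) := by
      intro z hz
      have := (convex_ball z₀ r).is_const_of_fderivWithin_eq_zero
        (𝕜 := ℂ) (hg.mono hball) ?_ hz (Metric.mem_ball_self hr)
      · exact this
      · intro x hx
        rw [fderivWithin_of_isOpen Metric.isOpen_ball hx, ← toSpanSingleton_deriv,
          hderiv0 (hball hx)]
        ext
        simp
    have : Set.EqOn g (fun _ => g z₀) U := by
      apply hga.eqOn_of_preconnected_of_eventuallyEq analyticOnNhd_const
        hconn.isPreconnected hz₀U
      filter_upwards [Metric.isOpen_ball.mem_nhds (Metric.mem_ball_self hr)] using hconst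
    exact hnc ⟨g z₀, this⟩
  -- conclude
  intro z hz
  have hGz : Gf z = 0 := hGf0 z hz
  have hFz : F z = 0 := by rw [hkey z hz, hGz, mul_zero]
  refine ⟨hGz, hFz, ?_⟩
  have hw : g z ≠ 0 := hg0 z hz
  rw [hGf] at hGz
  rw [hF] at hFz
  field_simp at hGz hFz
  have h6 : g z * (deriv g z) ^ 2
      = g z * (g z * (-(a₁ - Complex.I * a₂) * (g z) ^ 2 + 2 * a₃ * g z + (a₁ + Complex.I * a₂))) := by
    linear_combination (g z / 2) * hGz + (g z / 2) * hFz
  exact mul_left_cancel₀ hw h6
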